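/- Let n ≥ 2, γ > 0 and let α₁,…,αₙ be nonzero real constants, and define the generalized Cobb–Douglas function f(x₁,…,xₙ) = γ x₁^{α₁}·…·xₙ^{αₙ} on ℝ₊ⁿ. Then the Hessian determinant of f vanishes identically on ℝ₊ⁿ if and only if Σ_{i=1}^{n} αᵢ = 1. -/

import Mathlib

open Real Finset

/-- The partial derivative of `f : ℝⁿ → ℝ` in the `i`-th coordinate direction. -/
noncomputable def pderiv' {n : ℕ} (f : (Fin n → ℝ) → ℝ) (i : Fin n) (x : Fin n → ℝ) : ℝ :=
  deriv (fun t => f (Function.update x i t)) (x i)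

/-- The Hessian matrix of second-order partial derivatives of `f : ℝⁿ → ℝ`. -/
noncomputable def hessian {n : ℕ} (f : (Fin n → ℝ) → ℝ) (x : Fin n → ℝ) :
    Matrix (Fin n) (Fin n) ℝ :=
  Matrix.of fun i j => pderiv' (pderiv' f j) i x


lemma deriv_cmul_rpow (c a : ℝ) {t : ℝ} (ht : 0 < t) :
    deriv (fun s : ℝ => c * s ^ a) t = c * (a * t ^ (a - 1)) :=
  (((Real.hasDerivAt_rpow_const (p := a) (Or.inl ht.ne'))).const_mul c).deriv

lemma prod_update_rpow {n : ℕ} (x : Fin n → ℝ) (j : Fin n) (t : ℝ) (α : Fin n → ℝ) :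
    ∏ i, Function.update x j t i ^ α i = t ^ α j * ∏ i ∈ Finset.univ.erase j, x i ^ α i := by
  have : (fun i => Function.update x j t i ^ α i)
      = Function.update (fun i => x i ^ α i) j (t ^ α j) := by
    funext i
    rcases eq_or_ne i j with rfl | h
    · simp
    · simp [Function.update_of_ne h]
  rw [this, Finset.prod_update_of_mem (Finset.mem_univ j), Finset.sdiff_singleton_eq_erase]

lemma det_aux {n : ℕ} (u v d : Fin n → ℝ) (hd : ∀ i, d i ≠ 0) :
    (Matrix.of fun i j => u i * v j - if i = j then d i else 0).det
      = (∏ i, -d i) * (1 - ∑ i, v i * u i / d i) := by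
  have hM : (Matrix.of fun i j => u i * v j - if i = j then d i else 0)
      = Matrix.diagonal (fun i => -d i) *
        (1 + Matrix.replicateCol Unit (fun i => -(u i / d i)) * Matrix.replicateRow Unit v) := by
    ext i j
    rcases eq_or_ne i j with rfl | h
    · simp [Matrix.mul_apply, Matrix.diagonal_apply, Matrix.one_apply, Finset.mul_sum,
        Matrix.replicateCol, Matrix.replicateRow]
      field_simp [hd i]
      ring
    · simp [Matrix.mul_apply, Matrix.diagonal_apply, Matrix.one_apply, h,
        Finset.mul_sum, Matrix.replicateCol, Matrix.replicateRow, Finset.sum_ite_eq' , hd]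
      field_simp [hd i]
  rw [hM, Matrix.det_mul, Matrix.det_diagonal, Matrix.det_one_add_replicateCol_mul_replicateRow]
  congr 1
  rw [dotProduct]
  have : ∑ i, v i * -(u i / d i) = -∑ i, v i * u i / d i := by
    rw [← Finset.sum_neg_distrib]; exact Finset.sum_congr rfl fun i _ => by ring
  rw [this]; ring

/-- The generalized Cobb–Douglas function `f(x) = γ x₁^{α₁}⋯xₙ^{αₙ}` (with
`γ > 0` and nonzero exponents) has identically vanishing Hessian determinant
on `ℝ₊ⁿ` — i.e. the Cobb–Douglas hypersurface is developable — iff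
`∑ αᵢ = 1` (constant return to scale). -/
theorem stmt_5 (n : ℕ) (hn : 2 ≤ n) (γ : ℝ) (hγ : 0 < γ)
    (α : Fin n → ℝ) (hα : ∀ i, α i ≠ 0)
    (f : (Fin n → ℝ) → ℝ)
    (hf : ∀ x : Fin n → ℝ, (∀ i, 0 < x i) → f x = γ * ∏ i, (x i) ^ (α i)) :
    (∀ x : Fin n → ℝ, (∀ i, 0 < x i) → (hessian f x).det = 0) ↔
      (∑ i, α i) = 1 := by
  set g : (Fin n → ℝ) → ℝ := fun x => γ * ∏ i, x i ^ α i with hg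
  have hgpos : ∀ x : Fin n → ℝ, (∀ i, 0 < x i) → 0 < g x := by
    intro x hx
    exact mul_pos hγ (Finset.prod_pos fun i _ => Real.rpow_pos_of_pos (hx i) _)
  -- positivity of updates
  have hupd : ∀ (x : Fin n → ℝ), (∀ i, 0 < x i) → ∀ (i : Fin n) (t : ℝ), 0 < t →
      ∀ k, 0 < Function.update x i t k := by
    intro x hx i t ht k
    rcases eq_or_ne k i with rfl | h
    · simpa using ht
    · simpa [Function.update_of_ne h] using hx k
  -- first partial derivatives
  have h1 : ∀ x : Fin n → ℝ, (∀ i, 0 < x i) → ∀ j, pderiv' f j x = α j * g x / x j := by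
    intro x hx j
    have hev : (fun t => f (Function.update x j t)) =ᶠ[nhds (x j)]
        fun t => (γ * ∏ i ∈ Finset.univ.erase j, x i ^ α i) * t ^ α j := by
      filter_upwards [eventually_gt_nhds (hx j)] with t ht
      rw [hf _ (hupd x hx j t ht), prod_update_rpow]
      ring
    rw [pderiv', hev.deriv_eq, deriv_cmul_rpow _ _ (hx j)]
    have hprod : ∏ i, x i ^ α i = x j ^ α j * ∏ i ∈ Finset.univ.erase j, x i ^ α i :=
      (Finset.mul_prod_erase _ _ (Finset.mem_univ j)).symm
    rw [Real.rpow_sub_one (hx j).ne', hg]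
    beta_reduce
    rw [hprod]
    field_simp
  -- the Hessian
  have h2 : ∀ x : Fin n → ℝ, (∀ i, 0 < x i) → hessian f x =
      Matrix.of fun i j => (g x * α i / x i) * (α j / x j) -
        if i = j then g x * α i / x i ^ 2 else 0 := by
    intro x hx
    ext i j
    show pderiv' (pderiv' f j) i x = _
    have hP : ∏ k, x k ^ α k = x i ^ α i * ∏ k ∈ Finset.univ.erase i, x k ^ α k :=
      (Finset.mul_prod_erase _ _ (Finset.mem_univ i)).symm
    set P : ℝ := ∏ k ∈ Finset.univ.erase i, x k ^ α k with hPdef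
    rcases eq_or_ne i j with rfl | hij
    · -- diagonal case
      have hev : (fun t => pderiv' f i (Function.update x i t)) =ᶠ[nhds (x i)]
          fun t => (α i * γ * P) * t ^ (α i - 1) := by
        filter_upwards [eventually_gt_nhds (hx i)] with t ht
        rw [h1 _ (hupd x hx i t ht) i]
        simp only [Function.update_self, hg]
        rw [prod_update_rpow, Real.rpow_sub_one ht.ne']
        field_simp
        ring
      rw [pderiv', hev.deriv_eq, deriv_cmul_rpow _ _ (hx i)]
      simp only [Matrix.of_apply, if_pos rfl, if_true, hg]
      beta_reduce
      rw [hP, Real.rpow_sub_one (hx i).ne', Real.rpow_sub_one (hx i).ne']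
      field_simp
    · -- off-diagonal case
      have hev : (fun t => pderiv' f j (Function.update x i t)) =ᶠ[nhds (x i)]
          fun t => (α j / x j * (γ * P)) * t ^ α i := by
        filter_upwards [eventually_gt_nhds (hx i)] with t ht
        rw [h1 _ (hupd x hx i t ht) j]
        simp only [Function.update_of_ne (Ne.symm hij), hg]
        rw [prod_update_rpow]
        ring
      rw [pderiv', hev.deriv_eq, deriv_cmul_rpow _ _ (hx i)]
      simp only [Matrix.of_apply, if_neg hij, hg]
      beta_reduce
      rw [hP, Real.rpow_sub_one (hx i).ne']
      field_simp
      ring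
  -- the determinant formula
  have key : ∀ x : Fin n → ℝ, (∀ i, 0 < x i) →
      (hessian f x).det = (∏ i, -(g x * α i / x i ^ 2)) * (1 - ∑ i, α i) := by
    intro x hx
    have hd : ∀ i, g x * α i / x i ^ 2 ≠ 0 := fun i =>
      div_ne_zero (mul_ne_zero (hgpos x hx).ne' (hα i)) (pow_ne_zero _ (hx i).ne')
    rw [h2 x hx,
      det_aux (fun i => g x * α i / x i) (fun j => α j / x j) (fun i => g x * α i / x i ^ 2) hd]
    congr 1
    congr 1
    have hp : (∏ k, x k ^ α k) ≠ 0 :=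
      (Finset.prod_pos fun k _ => Real.rpow_pos_of_pos (hx k) _).ne'
    refine Finset.sum_congr rfl fun i _ => ?_
    simp only [hg]
    beta_reduce
    field_simp [hα i, (hx i).ne', hγ.ne', hp]
  have hprodne : ∀ x : Fin n → ℝ, (∀ i, 0 < x i) → (∏ i, -(g x * α i / x i ^ 2)) ≠ 0 := by
    intro x hx
    refine Finset.prod_ne_zero_iff.2 fun i _ => ?_
    exact neg_ne_zero.2 (div_ne_zero (mul_ne_zero (hgpos x hx).ne' (hα i)) (pow_ne_zero _ (hx i).ne'))
  constructor
  · intro h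
    have hx1 : ∀ i : Fin n, (0:ℝ) < (fun _ => (1:ℝ)) i := fun i => one_pos
    have := h (fun _ => 1) hx1
    rw [key _ hx1] at this
    rcases mul_eq_zero.1 this with h' | h'
    · exact absurd h' (hprodne _ hx1)
    · linarith [sub_eq_zero.1 h']
  · intro h x hx
    rw [key x hx, h]
    simp
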